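/- Let C be an [n,k] non-degenerate linear rank metric code over F_{q^m} with parity check matrix H. Then for 1 ≤ r ≤ k, d_r(C) = min{ i : 1 ≤ i ≤ n, there exists M ∈ F_q^{n×i} with rank(M) = i and i − r ≥ rank(H·M) }, where d_r(C) = min{ dim_{F_q} S_q(D) : D ≤ C, dim_{F_{q^m}} D = r }. -/

import Mathlib

open Matrix

/-- The `r`-th generalized rank weight (minimum q-support dimension of `r`-dim subcodes). -/
noncomputable def genRankWeight (Fq : Type*) {Fqm : Type*} [Field Fq] [Field Fqm]
    [Algebra Fq Fqm] {n : ℕ} (C : Submodule Fqm (Fin n → Fqm)) (r : ℕ) : ℕ :=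
  sInf { w | ∃ b : Fin r → Fin n → Fqm, LinearIndependent Fqm b ∧
    Submodule.span Fqm (Set.range b) ≤ C ∧
    w = Module.finrank Fq
      (Submodule.span Fq (Set.range fun j : Fin n => fun i : Fin r => b i j)) }

/-- Non-degenerate: the columns of a generator matrix are `F_q`-linearly independent;
equivalently, no nonzero `F_q`-linear combination of coordinates vanishes on all of `C`. -/
def Nondeg (Fq : Type*) {Fqm : Type*} [Field Fq] [Field Fqm] [Algebra Fq Fqm] {n : ℕ}
    (C : Submodule Fqm (Fin n → Fqm)) : Prop :=
  ∀ c : Fin n → Fq, (∀ x ∈ C, ∑ j, algebraMap Fq Fqm (c j) * x j = 0) → c = 0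

section Helpers

variable {Fq Fqm : Type*} [Field Fq] [Field Fqm] [Algebra Fq Fqm]

/-- A matrix whose `mulVecLin` has trivial kernel admits a left inverse. -/
lemma exists_left_inverse_of_ker {n d : ℕ} (M : Matrix (Fin n) (Fin d) Fq)
    (h : LinearMap.ker M.mulVecLin = ⊥) :
    ∃ N : Matrix (Fin d) (Fin n) Fq, N * M = 1 := by
  obtain ⟨g, hg⟩ := LinearMap.exists_leftInverse_of_injective M.mulVecLin h
  refine ⟨LinearMap.toMatrix' g, ?_⟩
  have hM : M = LinearMap.toMatrix' M.mulVecLin := by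
    rw [← Matrix.toLin'_apply', LinearMap.toMatrix'_toLin']
  conv_lhs => rw [hM]
  rw [← LinearMap.toMatrix'_comp, hg, LinearMap.toMatrix'_id]

lemma ker_eq_bot_of_rank_eq {n d : ℕ} (M : Matrix (Fin n) (Fin d) Fq) (h : M.rank = d) :
    LinearMap.ker M.mulVecLin = ⊥ := by
  have h2 := LinearMap.finrank_range_add_finrank_ker M.mulVecLin
  rw [Matrix.rank] at h
  have h3 : Module.finrank Fq (Fin d → Fq) = d := by simp
  rw [h, h3] at h2
  have h4 : Module.finrank Fq (LinearMap.ker M.mulVecLin) = 0 := by omega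
  exact Submodule.finrank_eq_zero.mp h4

lemma ker_map_eq_bot {n d : ℕ} (M : Matrix (Fin n) (Fin d) Fq)
    (N : Matrix (Fin d) (Fin n) Fq) (hNM : N * M = 1) :
    LinearMap.ker (M.map (algebraMap Fq Fqm)).mulVecLin = ⊥ := by
  have h1 : (N.map (algebraMap Fq Fqm)) * (M.map (algebraMap Fq Fqm)) = 1 := by
    rw [← Matrix.map_mul, hNM, Matrix.map_one _ (map_zero _) (map_one _)]
  rw [LinearMap.ker_eq_bot]
  intro x y hxy
  have key : ∀ v : Fin d → Fqm,
      (N.map (algebraMap Fq Fqm)).mulVec ((M.map (algebraMap Fq Fqm)).mulVec v) = v := by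
    intro v
    rw [Matrix.mulVec_mulVec, h1, Matrix.one_mulVec]
  calc x = (N.map (algebraMap Fq Fqm)).mulVec ((M.map (algebraMap Fq Fqm)).mulVec x) :=
        (key x).symm
    _ = (N.map (algebraMap Fq Fqm)).mulVec ((M.map (algebraMap Fq Fqm)).mulVec y) := by
        simp only [Matrix.mulVecLin_apply] at hxy; rw [hxy]
    _ = y := key y

lemma dirA {n nk r : ℕ} (C : Submodule Fqm (Fin n → Fqm))
    (H : Matrix (Fin nk) (Fin n) Fqm)
    (hH : ∀ x, x ∈ C ↔ H.mulVec x = 0) (hr1 : 1 ≤ r)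
    (b : Fin r → Fin n → Fqm) (hb : LinearIndependent Fqm b)
    (hbC : Submodule.span Fqm (Set.range b) ≤ C) :
    ∃ d : ℕ,
      d ≤ Module.finrank Fq (Submodule.span Fq
        (Set.range fun j : Fin n => fun i : Fin r => b i j)) ∧
      1 ≤ d ∧ d ≤ n ∧ ∃ M : Matrix (Fin n) (Fin d) Fq,
        M.rank = d ∧ (H * M.map (algebraMap Fq Fqm)).rank + r ≤ d := by
  classical
  set P := Submodule.span Fq (Set.range fun j : Fin n => fun i : Fin r => b i j) with hP
  haveI : FiniteDimensional Fq P := FiniteDimensional.span_of_finite Fq (Set.finite_range _)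
  let cvec : Fin n → P := fun j => ⟨fun i => b i j, Submodule.subset_span ⟨j, rfl⟩⟩
  let Θ : Module.Dual Fq P →ₗ[Fq] (Fin n → Fq) :=
    { toFun := fun g => fun j => g (cvec j)
      map_add' := fun f g => rfl
      map_smul' := fun c f => rfl }
  set V := LinearMap.range Θ with hV
  set d := Module.finrank Fq V with hd
  have hdP : d ≤ Module.finrank Fq P := by
    calc d ≤ Module.finrank Fq (Module.Dual Fq P) := LinearMap.finrank_range_le Θ
      _ = Module.finrank Fq P := Subspace.dual_finrank_eq
  let e : Module.Basis (Fin d) Fq V := Module.finBasisOfFinrankEq Fq V hd.symm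
  let M : Matrix (Fin n) (Fin d) Fq := Matrix.of fun j t => (e t : Fin n → Fq) j
  have hMT : Mᵀ = fun t => (e t : Fin n → Fq) := rfl
  have hspan : Submodule.span Fq (Set.range Mᵀ) = V := by
    have h1 : Set.range Mᵀ = V.subtype '' (Set.range e) := by
      rw [← Set.range_comp]; rfl
    rw [h1, Submodule.span_image, e.span_eq, Submodule.map_top, Submodule.range_subtype]
  have hrange : LinearMap.range M.mulVecLin = V := by
    rw [Matrix.range_mulVecLin]; exact hspan
  have hMrank : M.rank = d := by
    show Module.finrank Fq (LinearMap.range M.mulVecLin) = d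
    rw [hrange]
  have hker : LinearMap.ker M.mulVecLin = ⊥ := ker_eq_bot_of_rank_eq M hMrank
  obtain ⟨N, hNM⟩ := exists_left_inverse_of_ker M hker
  have hkerm : LinearMap.ker (M.map (algebraMap Fq Fqm)).mulVecLin = ⊥ :=
    ker_map_eq_bot M N hNM
  set W := LinearMap.range (M.map (algebraMap Fq Fqm)).mulVecLin with hW
  have hVW : ∀ v ∈ V, (fun j => algebraMap Fq Fqm (v j)) ∈ W := by
    intro v hv
    rw [← hrange] at hv
    obtain ⟨c, hc⟩ := hv
    refine ⟨fun t => algebraMap Fq Fqm (c t), ?_⟩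
    rw [Matrix.mulVecLin_apply]
    funext j
    have h2 := (RingHom.map_mulVec (algebraMap Fq Fqm) M c j).symm
    rw [Matrix.mulVecLin_apply] at hc
    rw [hc] at h2
    exact h2.symm ▸ rfl
  set B := Module.Basis.ofVectorSpace Fq Fqm with hB
  have hbW : ∀ t : Fin r, b t ∈ W := by
    intro t
    set s : Finset _ := Finset.univ.biUnion (fun j : Fin n => (B.repr (b t j)).support) with hs
    have key : b t = ∑ l ∈ s, (B l) • (fun j : Fin n => algebraMap Fq Fqm (B.repr (b t j) l)) := by
      funext j
      rw [Finset.sum_apply]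
      have h1 : ∀ l, (B l • fun j : Fin n => algebraMap Fq Fqm (B.repr (b t j) l)) j
          = B.repr (b t j) l • B l := by
        intro l
        simp only [Pi.smul_apply, smul_eq_mul, Algebra.smul_def]
        ring
      simp only [h1]
      have hsup : (B.repr (b t j)).support ⊆ s :=
        Finset.subset_biUnion_of_mem (fun j : Fin n => (B.repr (b t j)).support)
          (Finset.mem_univ j)
      have h2 : ∑ l ∈ (B.repr (b t j)).support, B.repr (b t j) l • B l = b t j := by
        conv_rhs => rw [← B.linearCombination_repr (b t j)]
        rw [Finsupp.linearCombination_apply, Finsupp.sum]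
      refine h2.symm.trans (Finset.sum_subset hsup fun l _ hl => ?_)
      rw [Finsupp.notMem_support_iff.mp hl, zero_smul]
    rw [key]
    apply Submodule.sum_mem
    intro l _
    apply Submodule.smul_mem
    have hvV : (fun j : Fin n => B.repr (b t j) l) ∈ V := by
      refine ⟨(B.coord l).comp
        ((LinearMap.proj (R := Fq) (φ := fun _ : Fin r => Fqm) t).comp P.subtype), ?_⟩
      funext j
      simp [Θ, cvec, Module.Basis.coord_apply]
    exact hVW _ hvV
  choose y hy using fun t => LinearMap.mem_range.mp (hbW t)
  have hyb : ∀ t, (M.map (algebraMap Fq Fqm)).mulVec (y t) = b t := by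
    intro t; have := hy t; rwa [Matrix.mulVecLin_apply] at this
  have hyind : LinearIndependent Fqm y := by
    apply LinearIndependent.of_comp (M.map (algebraMap Fq Fqm)).mulVecLin
    have : (M.map (algebraMap Fq Fqm)).mulVecLin ∘ y = b := funext hy
    rw [this]; exact hb
  have hymem : ∀ t, y t ∈ LinearMap.ker (H * M.map (algebraMap Fq Fqm)).mulVecLin := by
    intro t
    rw [LinearMap.mem_ker, Matrix.mulVecLin_apply, ← Matrix.mulVec_mulVec, hyb]
    exact (hH (b t)).mp (hbC (Submodule.subset_span ⟨t, rfl⟩))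
  set K := LinearMap.ker (H * M.map (algebraMap Fq Fqm)).mulVecLin with hK
  have hrK : r ≤ Module.finrank Fqm K := by
    let y' : Fin r → K := fun t => ⟨y t, hymem t⟩
    have hy'ind : LinearIndependent Fqm y' := by
      apply LinearIndependent.of_comp K.subtype
      exact hyind
    simpa using hy'ind.fintype_card_le_finrank
  have hrn := LinearMap.finrank_range_add_finrank_ker (H * M.map (algebraMap Fq Fqm)).mulVecLin
  have hfd : Module.finrank Fqm (Fin d → Fqm) = d := by simp
  rw [hfd] at hrn
  have hrankdef : (H * M.map (algebraMap Fq Fqm)).rank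
      = Module.finrank Fqm (LinearMap.range (H * M.map (algebraMap Fq Fqm)).mulVecLin) := rfl
  have hfinal : (H * M.map (algebraMap Fq Fqm)).rank + r ≤ d := by
    rw [hrankdef]
    calc Module.finrank Fqm (LinearMap.range (H * M.map (algebraMap Fq Fqm)).mulVecLin) + r
        ≤ Module.finrank Fqm (LinearMap.range (H * M.map (algebraMap Fq Fqm)).mulVecLin)
          + Module.finrank Fqm K := Nat.add_le_add_left hrK _
      _ = d := hrn
  have hd1 : 1 ≤ d := by
    rcases Nat.eq_zero_or_pos d with h0 | h
    · exfalso
      haveI : IsEmpty (Fin d) := by rw [h0]; infer_instance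
      have hzero : (M.map (algebraMap Fq Fqm)).mulVec (y ⟨0, hr1⟩) = 0 := by
        funext j
        simp [Matrix.mulVec, dotProduct]
      exact hb.ne_zero ⟨0, hr1⟩ (by rw [← hyb ⟨0, hr1⟩, hzero])
    · exact h
  have hdn : d ≤ n := by
    have h1 := Submodule.finrank_le V
    simpa using h1
  exact ⟨d, hdP, hd1, hdn, M, hMrank, hfinal⟩

lemma dirB {n nk r i : ℕ} (C : Submodule Fqm (Fin n → Fqm))
    (H : Matrix (Fin nk) (Fin n) Fqm)
    (hH : ∀ x, x ∈ C ↔ H.mulVec x = 0)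
    (M : Matrix (Fin n) (Fin i) Fq) (hM : M.rank = i)
    (hle : (H * M.map (algebraMap Fq Fqm)).rank + r ≤ i) :
    ∃ b : Fin r → Fin n → Fqm, LinearIndependent Fqm b ∧
      Submodule.span Fqm (Set.range b) ≤ C ∧
      Module.finrank Fq (Submodule.span Fq
        (Set.range fun j : Fin n => fun t : Fin r => b t j)) ≤ i := by
  classical
  obtain ⟨N, hNM⟩ := exists_left_inverse_of_ker M (ker_eq_bot_of_rank_eq M hM)
  have hkerm : LinearMap.ker (M.map (algebraMap Fq Fqm)).mulVecLin = ⊥ :=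
    ker_map_eq_bot M N hNM
  set K := LinearMap.ker (H * M.map (algebraMap Fq Fqm)).mulVecLin with hK
  have hrn : Module.finrank Fqm (LinearMap.range (H * M.map (algebraMap Fq Fqm)).mulVecLin)
      + Module.finrank Fqm K = i := by
    rw [hK]
    have h0 := LinearMap.finrank_range_add_finrank_ker (H * M.map (algebraMap Fq Fqm)).mulVecLin
    simpa using h0
  have hrankdef : (H * M.map (algebraMap Fq Fqm)).rank
      = Module.finrank Fqm (LinearMap.range (H * M.map (algebraMap Fq Fqm)).mulVecLin) := rfl
  have hrK : r ≤ Module.finrank Fqm K := by rw [hrankdef] at hle; omega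
  let kb : Module.Basis (Fin (Module.finrank Fqm K)) Fqm K := Module.finBasis Fqm K
  let z : Fin r → (Fin i → Fqm) := fun t => (kb (Fin.castLE hrK t) : Fin i → Fqm)
  have hzind : LinearIndependent Fqm z := by
    have h1 : LinearIndependent Fqm (fun t : Fin (Module.finrank Fqm K) => (kb t : Fin i → Fqm)) :=
      kb.linearIndependent.map' K.subtype K.ker_subtype
    exact h1.comp (Fin.castLE hrK) (Fin.castLE_injective hrK)
  have hzmem : ∀ t, z t ∈ K := fun t => (kb (Fin.castLE hrK t)).2
  let b : Fin r → Fin n → Fqm := fun t => (M.map (algebraMap Fq Fqm)).mulVecLin (z t)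
  have hbind : LinearIndependent Fqm b :=
    hzind.map' (M.map (algebraMap Fq Fqm)).mulVecLin hkerm
  have hbC : Submodule.span Fqm (Set.range b) ≤ C := by
    rw [Submodule.span_le]
    rintro x ⟨t, rfl⟩
    rw [SetLike.mem_coe, hH]
    show H.mulVec ((M.map (algebraMap Fq Fqm)).mulVecLin (z t)) = 0
    rw [Matrix.mulVecLin_apply, Matrix.mulVec_mulVec]
    have := hzmem t
    rw [hK, LinearMap.mem_ker, Matrix.mulVecLin_apply] at this
    exact this
  refine ⟨b, hbind, hbC, ?_⟩
  let u : Fin i → (Fin r → Fqm) := fun s t => z t s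
  have hcols : ∀ j : Fin n, (fun t : Fin r => b t j) ∈ Submodule.span Fq (Set.range u) := by
    intro j
    have hexp : (fun t : Fin r => b t j) = ∑ s : Fin i, M j s • u s := by
      funext t
      rw [Finset.sum_apply]
      simp only [b, Matrix.mulVecLin_apply, Matrix.mulVec, dotProduct, Matrix.map_apply,
        Pi.smul_apply, Algebra.smul_def, u]
    rw [hexp]
    exact Submodule.sum_mem _ fun s _ =>
      Submodule.smul_mem _ _ (Submodule.subset_span ⟨s, rfl⟩)
  have hle2 : Submodule.span Fq (Set.range fun j : Fin n => fun t : Fin r => b t j)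
      ≤ Submodule.span Fq (Set.range u) := by
    rw [Submodule.span_le]
    rintro x ⟨j, rfl⟩
    exact hcols j
  haveI : FiniteDimensional Fq (Submodule.span Fq (Set.range u)) :=
    FiniteDimensional.span_of_finite Fq (Set.finite_range u)
  calc Module.finrank Fq (Submodule.span Fq (Set.range fun j : Fin n => fun t : Fin r => b t j))
      ≤ Module.finrank Fq (Submodule.span Fq (Set.range u)) := Submodule.finrank_mono hle2
    _ ≤ Fintype.card (Fin i) := finrank_range_le_card u
    _ = i := Fintype.card_fin i

end Helpers

theorem genRankWeight_eq_parityCheck_min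
    {Fq Fqm : Type*} [Field Fq] [Field Fqm] [Algebra Fq Fqm]
    {n k : ℕ} (C : Submodule Fqm (Fin n → Fqm)) (hCk : Module.finrank Fqm C = k)
    (hnd : Nondeg Fq C)
    (H : Matrix (Fin (n - k)) (Fin n) Fqm)
    (hH : ∀ x, x ∈ C ↔ H.mulVec x = 0)
    (r : ℕ) (hr1 : 1 ≤ r) (hrk : r ≤ k) :
    genRankWeight Fq C r =
      sInf { i | 1 ≤ i ∧ i ≤ n ∧ ∃ M : Matrix (Fin n) (Fin i) Fq,
        M.rank = i ∧ (H * M.map (algebraMap Fq Fqm)).rank + r ≤ i } := by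
  classical
  unfold genRankWeight
  set S1 := { w | ∃ b : Fin r → Fin n → Fqm, LinearIndependent Fqm b ∧
    Submodule.span Fqm (Set.range b) ≤ C ∧
    w = Module.finrank Fq
      (Submodule.span Fq (Set.range fun j : Fin n => fun i : Fin r => b i j)) } with hS1
  set S2 := { i | 1 ≤ i ∧ i ≤ n ∧ ∃ M : Matrix (Fin n) (Fin i) Fq,
        M.rank = i ∧ (H * M.map (algebraMap Fq Fqm)).rank + r ≤ i } with hS2
  haveI : FiniteDimensional Fqm C := FiniteDimensional.finiteDimensional_submodule C
  let cb : Module.Basis (Fin k) Fqm C := Module.finBasisOfFinrankEq Fqm C hCk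
  let b0 : Fin r → Fin n → Fqm := fun t => (cb (Fin.castLE hrk t) : Fin n → Fqm)
  have hb0ind : LinearIndependent Fqm b0 :=
    (cb.linearIndependent.map' C.subtype C.ker_subtype).comp
      (Fin.castLE hrk) (Fin.castLE_injective hrk)
  have hb0C : Submodule.span Fqm (Set.range b0) ≤ C := by
    rw [Submodule.span_le]
    rintro x ⟨t, rfl⟩
    exact (cb (Fin.castLE hrk t)).2
  have hS1ne : S1.Nonempty := ⟨_, b0, hb0ind, hb0C, rfl⟩
  have hAB : ∀ w ∈ S1, ∃ i ∈ S2, i ≤ w := by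
    rintro w ⟨b, hbind, hbC, rfl⟩
    obtain ⟨d, hdle, hd1, hdn, M, hM1, hM2⟩ := dirA (Fq := Fq) C H hH hr1 b hbind hbC
    exact ⟨d, ⟨hd1, hdn, M, hM1, hM2⟩, hdle⟩
  have hBA : ∀ i ∈ S2, ∃ w ∈ S1, w ≤ i := by
    rintro i ⟨_, _, M, hM1, hM2⟩
    obtain ⟨b, hbind, hbC, hble⟩ := dirB C H hH M hM1 hM2
    exact ⟨_, ⟨b, hbind, hbC, rfl⟩, hble⟩
  have hS2ne : S2.Nonempty := by
    obtain ⟨w, hw⟩ := hS1ne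
    obtain ⟨i, hi, _⟩ := hAB w hw
    exact ⟨i, hi⟩
  apply le_antisymm
  · obtain ⟨w, hw, hle⟩ := hBA _ (Nat.sInf_mem hS2ne)
    exact le_trans (Nat.sInf_le hw) hle
  · obtain ⟨i, hi, hle⟩ := hAB _ (Nat.sInf_mem hS1ne)
    exact le_trans (Nat.sInf_le hi) hle
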